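/- Let q be an odd prime, let m₁, m₂ ∈ {0,1}, and let e₁, e₂ be integers with |e₁| ≤ B and |e₂| ≤ B. Then there exists an integer e_add with |e_add| ≤ 2B + 1 such that, in ZMod q, (m₁ + m₂)·⌊q/2⌋ + e₁ + e₂ = (m₁ XOR m₂)·⌊q/2⌋ + e_add, where m₁ XOR m₂ denotes addition of the bits modulo 2. -/
import Mathlib


/-- Homomorphic addition noise: for bits `m₁, m₂` and noises `e₁, e₂` bounded by `B`,
there is a noise `e_add` bounded by `2B + 1` such that in `ZMod q`,
`(m₁ + m₂)⌊q/2⌋ + e₁ + e₂ = (m₁ XOR m₂)⌊q/2⌋ + e_add`. -/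
theorem stmt_7 (q : ℕ) (hq : q.Prime) [Fact q.Prime] (hodd : Odd q)
    (m₁ m₂ : ℤ) (hm₁ : m₁ = 0 ∨ m₁ = 1) (hm₂ : m₂ = 0 ∨ m₂ = 1)
    (B : ℤ) (hB : 0 ≤ B) (e₁ e₂ : ℤ) (he₁ : |e₁| ≤ B) (he₂ : |e₂| ≤ B) :
    ∃ eadd : ℤ, |eadd| ≤ 2 * B + 1 ∧
      ((m₁ + m₂ : ℤ) : ZMod q) * ((q / 2 : ℕ) : ZMod q) + (e₁ : ZMod q) + (e₂ : ZMod q) =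
        (((m₁ + m₂) % 2 : ℤ) : ZMod q) * ((q / 2 : ℕ) : ZMod q) + (eadd : ZMod q) := by
  have hbound : |e₁ + e₂| ≤ 2 * B + 1 := by
    calc |e₁ + e₂| ≤ |e₁| + |e₂| := abs_add_le _ _
    _ ≤ 2 * B + 1 := by linarith
  rcases hm₁ with rfl | rfl <;> rcases hm₂ with rfl | rfl
  · exact ⟨e₁ + e₂, hbound, by push_cast; ring⟩
  · exact ⟨e₁ + e₂, hbound, by push_cast; ring⟩
  · exact ⟨e₁ + e₂, hbound, by push_cast; ring⟩
  · refine ⟨e₁ + e₂ - 1, ?_, ?_⟩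
    · calc |e₁ + e₂ - 1| ≤ |e₁| + |e₂| + 1 := by
            calc |e₁ + e₂ - 1| ≤ |e₁ + e₂| + |(-1 : ℤ)| := abs_sub _ _
            _ ≤ |e₁| + |e₂| + 1 := by simp [abs_add_le, add_le_add_right (abs_add_le e₁ e₂)]
      _ ≤ 2 * B + 1 := by linarith
    · have h2 : ((2 : ZMod q)) * ((q / 2 : ℕ) : ZMod q) = -1 := by
        obtain ⟨k, hk⟩ := hodd
        have hq1 : 2 * (q / 2) = q - 1 := by omega
        have : (((2 * (q / 2) : ℕ)) : ZMod q) = ((q - 1 : ℕ) : ZMod q) := by rw [hq1]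
        push_cast at this
        rw [Nat.cast_sub hq.one_lt.le] at this
        simpa [ZMod.natCast_self] using this
      norm_num
      rw [h2]
      push_cast
      ring
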